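/- For l ≥ 3, the value BRW(τ; M_1, ..., M_l) can be computed with exactly ⌊l/2⌋ field multiplications, given the precomputed squarings τ^2, τ^4, ..., τ^{2^{⌊lg l⌋}}. Formally, define the multiplication-count function T by T(0) = T(1) = 0, T(2) = 1, T(3) = 1, and T(l) = T(2^r − 1) + 1 + T(l − 2^r) for 2^r ≤ l < 2^{r+1} with r ≥ 2 (where 2^r is the largest power of 2 at most l); then T(l) = ⌊l/2⌋ for all l ≥ 0. -/

import Mathlib

/-- The multiplication count `T` for the recursive BRW evaluation, characterized by
`T(0) = T(1) = 0`, `T(2) = T(3) = 1`, and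
`T(l) = T(2^r − 1) + 1 + T(l − 2^r)` whenever `r ≥ 2` and `2^r ≤ l < 2^(r+1)`,
satisfies `T(l) = ⌊l/2⌋` for all `l ≥ 0`. -/
theorem brw_mult_count (T : ℕ → ℕ)
    (h0 : T 0 = 0) (h1 : T 1 = 0) (h2 : T 2 = 1) (h3 : T 3 = 1)
    (hrec : ∀ l r : ℕ, 2 ≤ r → 2 ^ r ≤ l → l < 2 ^ (r + 1) →
      T l = T (2 ^ r - 1) + 1 + T (l - 2 ^ r)) :
    ∀ l : ℕ, T l = l / 2 := by
  intro l
  induction l using Nat.strong_induction_on with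
  | _ l ih =>
    match l, ih with
    | 0, _ => simpa using h0
    | 1, _ => simpa using h1
    | 2, _ => simpa using h2
    | 3, _ => simpa using h3
    | (n + 4), ih =>
      set l := n + 4 with hl
      set r := Nat.log2 l with hr
      have hle : 2 ^ r ≤ l := Nat.log2_self_le (by omega)
      have hlt : l < 2 ^ (r + 1) := Nat.lt_log2_self
      have hr2 : 2 ≤ r := by
        by_contra h
        have : 2 ^ (r + 1) ≤ 2 ^ 2 := Nat.pow_le_pow_right (by norm_num) (by omega)
        omega
      have key := hrec l r hr2 hle hlt
      have hpow : 2 ^ r = 2 * 2 ^ (r - 1) := by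
        rw [← pow_succ']; congr 1
      have hpow2 : 2 ^ (r + 1) = 4 * 2 ^ (r - 1) := by
        rw [pow_succ, hpow]; ring
      have hk2 : 2 ≤ 2 ^ (r - 1) := by
        calc 2 = 2 ^ 1 := rfl
        _ ≤ 2 ^ (r - 1) := Nat.pow_le_pow_right (by norm_num) (by omega)
      have h1' : T (2 ^ r - 1) = (2 ^ r - 1) / 2 := by
        apply ih; omega
      have h2' : T (l - 2 ^ r) = (l - 2 ^ r) / 2 := by
        apply ih; omega
      rw [key, h1', h2']
      omega
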